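/- For the Gaussian f_T(x₁) = exp(πi x₁ᵗTx₁) with Im T positive definite, and the Heisenberg representation (π_{(h₁,h₂)} f)(x₁) = exp(2πi x₁ᵗh₂ + πi h₁ᵗh₂) f(x₁+h₁), the L² inner product satisfies ⟨f_T, π_h f_T⟩ = (2ⁿ det(Im T))^{-1/2} · exp(−(π/2) H(h̲,h̲)), where h̲ = Th₁ + h₂ and H(g̲,h̲) = g̲ᵗ (Im T)^{-1} conj(h̲). -/

import Mathlib

open Real Complex Matrix MeasureTheory

noncomputable section

def cvec {n : ℕ} (v : Fin n → ℝ) : Fin n → ℂ := fun i => (v i : ℂ)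

/-- `h̲ = T h₁ + h₂`. -/
def uVec {n : ℕ} (T : Matrix (Fin n) (Fin n) ℂ) (h : (Fin n → ℝ) × (Fin n → ℝ)) :
    Fin n → ℂ :=
  T.mulVec (cvec h.1) + cvec h.2

/-- `h̲* = conj(T) h₁ + h₂`. -/
def uVecStar {n : ℕ} (T : Matrix (Fin n) (Fin n) ℂ) (h : (Fin n → ℝ) × (Fin n → ℝ)) :
    Fin n → ℂ :=
  (T.map (starRingEnd ℂ)).mulVec (cvec h.1) + cvec h.2

/-- `H(g̲,h̲) = g̲ᵗ (Im T)⁻¹ h̲*`. -/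
def Hform {n : ℕ} (T : Matrix (Fin n) (Fin n) ℂ)
    (g h : (Fin n → ℝ) × (Fin n → ℝ)) : ℂ :=
  dotProduct (uVec T g) ((((T.map Complex.im)⁻¹).map (fun r => (r : ℂ))).mulVec (uVecStar T h))

/-- The Gaussian theta vector `f_T(x₁) = exp(πi x₁ᵗ T x₁)`. -/
def gaussian {n : ℕ} (T : Matrix (Fin n) (Fin n) ℂ) (x : Fin n → ℝ) : ℂ :=
  Complex.exp ((π : ℂ) * Complex.I * dotProduct (cvec x) (T.mulVec (cvec x)))

/-- The Heisenberg representation. -/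
def heisRep {n : ℕ} (y : (Fin n → ℝ) × (Fin n → ℝ)) (f : (Fin n → ℝ) → ℂ)
    (x₁ : Fin n → ℝ) : ℂ :=
  Complex.exp (2 * (π : ℂ) * Complex.I * dotProduct (cvec x₁) (cvec y.2) +
    (π : ℂ) * Complex.I * dotProduct (cvec y.1) (cvec y.2)) * f (x₁ + y.1)

variable {n : ℕ}

lemma cvec_add (a b : Fin n → ℝ) : cvec (a + b) = cvec a + cvec b := by
  funext i; simp [cvec]

lemma cvec_mulVec (M : Matrix (Fin n) (Fin n) ℝ) (v : Fin n → ℝ) :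
    cvec (M *ᵥ v) = (M.map (fun r => (r:ℂ))) *ᵥ cvec v := by
  funext i
  simp [cvec, mulVec, dotProduct, Matrix.map_apply]

lemma dot_swap (M : Matrix (Fin n) (Fin n) ℂ) (u w : Fin n → ℂ) :
    (M *ᵥ u) ⬝ᵥ w = u ⬝ᵥ (Mᵀ *ᵥ w) := by
  rw [dotProduct_comm, Matrix.dotProduct_mulVec, ← Matrix.mulVec_transpose, dotProduct_comm]

lemma conj_dot_mulVec (a b : Fin n → ℝ) (M : Matrix (Fin n) (Fin n) ℂ) :
    (starRingEnd ℂ) (cvec a ⬝ᵥ M *ᵥ cvec b) =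
      cvec a ⬝ᵥ (M.map (starRingEnd ℂ)) *ᵥ cvec b := by
  simp [dotProduct, mulVec, cvec, map_sum, Matrix.map_apply]

lemma conj_dot_cvec' (a b : Fin n → ℝ) :
    (starRingEnd ℂ) (cvec a ⬝ᵥ cvec b) = cvec a ⬝ᵥ cvec b := by
  simp [dotProduct, cvec, map_sum]

lemma sub_conj_matrix (T : Matrix (Fin n) (Fin n) ℂ) :
    T - T.map (starRingEnd ℂ) = (2 * Complex.I) • ((T.map Complex.im).map (fun r => (r:ℂ))) := by
  ext j k
  simp only [Matrix.sub_apply, Matrix.map_apply, Matrix.smul_apply, smul_eq_mul]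
  rw [Complex.sub_conj]
  push_cast; ring

lemma mapc_mul (M N : Matrix (Fin n) (Fin n) ℝ) :
    ((M * N).map (fun r => (r:ℂ))) = M.map (fun r => (r:ℂ)) * N.map (fun r => (r:ℂ)) :=
  Matrix.map_mul (f := Complex.ofRealHom)

lemma mapc_one : ((1 : Matrix (Fin n) (Fin n) ℝ).map (fun r => (r:ℂ))) = 1 :=
  Matrix.map_one _ (by simp) (by simp)

lemma mapc_transpose (M : Matrix (Fin n) (Fin n) ℝ) :
    (M.map (fun r => (r:ℂ)))ᵀ = Mᵀ.map (fun r => (r:ℂ)) :=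
  (Matrix.transpose_map).symm

lemma pointwise_eq (T : Matrix (Fin n) (Fin n) ℂ) (hsymm : T.IsSymm)
    (h : (Fin n → ℝ) × (Fin n → ℝ)) (x : Fin n → ℝ) :
    gaussian T x * (starRingEnd ℂ) (heisRep h (gaussian T) x) =
      Complex.exp ((-((π:ℂ) * Complex.I)) * (cvec h.1 ⬝ᵥ uVecStar T h) +
        ((-(2 * (π:ℂ))) * (cvec x ⬝ᵥ ((T.map Complex.im).map (fun r => (r:ℂ))) *ᵥ cvec x) +
         (-(2 * (π:ℂ) * Complex.I)) * (cvec x ⬝ᵥ uVecStar T h))) := by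
  set Tc := T.map (starRingEnd ℂ) with hTc
  have hTcsymm : Tcᵀ = Tc := by
    rw [hTc, ← Matrix.transpose_map, hsymm.eq]
  unfold gaussian heisRep
  beta_reduce
  rw [_root_.map_mul, ← Complex.exp_conj, ← Complex.exp_conj, ← Complex.exp_add,
    ← Complex.exp_add]
  congr 1
  simp only [map_add, _root_.map_mul, Complex.conj_I, Complex.conj_ofReal, map_ofNat,
    conj_dot_cvec', conj_dot_mulVec]
  rw [cvec_add]
  set X := cvec x
  set H₁ := cvec h.1
  set H₂ := cvec h.2
  have e4 : (X + H₁) ⬝ᵥ Tc *ᵥ (X + H₁) =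
      X ⬝ᵥ Tc *ᵥ X + 2 * (X ⬝ᵥ Tc *ᵥ H₁) + H₁ ⬝ᵥ Tc *ᵥ H₁ := by
    rw [Matrix.mulVec_add, dotProduct_add, add_dotProduct, add_dotProduct]
    have : H₁ ⬝ᵥ Tc *ᵥ X = X ⬝ᵥ Tc *ᵥ H₁ := by
      rw [dotProduct_comm, dot_swap, hTcsymm]
    rw [this]; ring
  have e1 : X ⬝ᵥ T *ᵥ X - X ⬝ᵥ Tc *ᵥ X =
      2 * Complex.I * (X ⬝ᵥ ((T.map Complex.im).map (fun r => (r:ℂ))) *ᵥ X) := by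
    rw [← dotProduct_sub, ← Matrix.sub_mulVec, hTc, sub_conj_matrix T]
    simp [Matrix.smul_mulVec, smul_eq_mul]
  have e2 : cvec x ⬝ᵥ uVecStar T h = X ⬝ᵥ Tc *ᵥ H₁ + X ⬝ᵥ H₂ := by
    rw [uVecStar, dotProduct_add, hTc]
  have e3 : cvec h.1 ⬝ᵥ uVecStar T h = H₁ ⬝ᵥ Tc *ᵥ H₁ + H₁ ⬝ᵥ H₂ := by
    rw [uVecStar, dotProduct_add, hTc]
  have hI : (Complex.I) ^ 2 = -1 := Complex.I_sq
  rw [e2, e3, e4]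
  linear_combination (π : ℂ) * Complex.I * e1 +
    (2 * (π:ℂ) * (X ⬝ᵥ ((T.map Complex.im).map (fun r => (r:ℂ))) *ᵥ X)) * hI

/-- `⟨f_T, π_h f_T⟩ = (2ⁿ det(Im T))^{-1/2} · exp(−(π/2) H(h̲,h̲))`. -/
theorem gaussian_inner_heisRep {n : ℕ} (T : Matrix (Fin n) (Fin n) ℂ)
    (hsymm : T.IsSymm) (hpos : (T.map Complex.im).PosDef)
    (h : (Fin n → ℝ) × (Fin n → ℝ)) :
    ∫ x : Fin n → ℝ, gaussian T x * (starRingEnd ℂ) (heisRep h (gaussian T) x) =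
      ((Real.sqrt (2 ^ n * (T.map Complex.im).det))⁻¹ : ℂ) *
        Complex.exp (-((π : ℂ) / 2) * Hform T h h) := by
  classical
  have hS : (T.map Complex.im).PosDef := hpos
  set S : Matrix (Fin n) (Fin n) ℝ := T.map Complex.im with hSdef
  have hSsd : S.PosSemidef := hS.posSemidef
  open scoped MatrixOrder in
  set A : Matrix (Fin n) (Fin n) ℝ := CFC.sqrt S with hAdef
  have hAA : A * A = S := by
    open scoped MatrixOrder in exact CFC.sqrt_mul_sqrt_self S hSsd.nonneg
  have hAsd : A.PosSemidef := by
    open scoped MatrixOrder in exact (CFC.sqrt_nonneg S).posSemidef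
  have hAsymm : Aᵀ = A := by
    rw [← Matrix.conjTranspose_eq_transpose_of_trivial]; exact hAsd.isHermitian
  have hSsymm : Sᵀ = S := by
    rw [← Matrix.conjTranspose_eq_transpose_of_trivial]; exact hS.isHermitian
  have hApd : A.PosDef := by
    refine Matrix.PosDef.of_dotProduct_mulVec_pos hAsd.isHermitian fun x hx =>
      lt_of_le_of_ne (hAsd.dotProduct_mulVec_nonneg x) (fun heq => ?_)
    have h0 : A *ᵥ x = 0 := (hAsd.dotProduct_mulVec_zero_iff x).mp heq.symm
    have hSx : S *ᵥ x = 0 := by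
      rw [← hAA, ← Matrix.mulVec_mulVec, h0, Matrix.mulVec_zero]
    have hlt := hS.dotProduct_mulVec_pos hx
    rw [hSx, dotProduct_zero] at hlt
    exact lt_irrefl 0 hlt
  have hdetA : 0 < A.det := hApd.det_pos
  have hdetS : 0 < S.det := hS.det_pos
  have hdetAS : A.det * A.det = S.det := by rw [← Matrix.det_mul, hAA]
  have hAinv' : A⁻¹ * A = 1 := Matrix.nonsing_inv_mul A hdetA.ne'.isUnit
  have hAinv : A * A⁻¹ = 1 := Matrix.mul_nonsing_inv A hdetA.ne'.isUnit
  have hAiT : (A⁻¹)ᵀ = A⁻¹ := by rw [Matrix.transpose_nonsing_inv, hAsymm]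
  set Sc := S.map (fun r => (r:ℂ)) with hScdef
  set Ac := A.map (fun r => (r:ℂ)) with hAcdef
  set Bc := (A⁻¹).map (fun r => (r:ℂ)) with hBcdef
  set bc := uVecStar T h with hbcdef
  have hBcAc : Bc * Ac = 1 := by rw [hBcdef, hAcdef, ← mapc_mul, hAinv', mapc_one]
  have hAcBc : Ac * Bc = 1 := by rw [hBcdef, hAcdef, ← mapc_mul, hAinv, mapc_one]
  have hBct : Bcᵀ = Bc := by rw [hBcdef, mapc_transpose, hAiT]
  have hSct : Scᵀ = Sc := by rw [hScdef, mapc_transpose, hSsymm]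
  have hScAcAc : Sc = Ac * Ac := by rw [hScdef, hAcdef, ← mapc_mul, hAA]
  have hSinvc : ((S⁻¹).map (fun r => (r:ℂ))) = Bc * Bc := by
    rw [← hAA, Matrix.mul_inv_rev, mapc_mul, hBcdef]
  have hScSinv : Sc * ((S⁻¹).map (fun r => (r:ℂ))) = 1 := by
    rw [hScdef, ← mapc_mul, Matrix.mul_nonsing_inv S hdetS.ne'.isUnit, mapc_one]
  -- abbreviations
  set C₀ : ℂ := (-((π:ℂ) * Complex.I)) * (cvec h.1 ⬝ᵥ bc) with hC₀
  set F : (Fin n → ℝ) → ℂ := fun x =>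
    Complex.exp (C₀ + ((-(2 * (π:ℂ))) * (cvec x ⬝ᵥ Sc *ᵥ cvec x) +
      (-(2 * (π:ℂ) * Complex.I)) * (cvec x ⬝ᵥ bc))) with hF
  have hpt : ∀ x, gaussian T x * (starRingEnd ℂ) (heisRep h (gaussian T) x) = F x :=
    fun x => pointwise_eq T hsymm h x
  simp only [hpt]
  -- continuity of F
  have hFc : Continuous F := by
    apply Complex.continuous_exp.comp
    simp only [dotProduct, mulVec, cvec]
    fun_prop
  -- change of variables
  have hdetAi : (A⁻¹).det ≠ 0 := by
    rw [Matrix.det_nonsing_inv, Ring.inverse_eq_inv']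
    exact inv_ne_zero hdetA.ne'
  have hmap := Real.map_matrix_volume_pi_eq_smul_volume_pi hdetAi
  have hφc : Continuous (Matrix.toLin' (A⁻¹)) := LinearMap.continuous_on_pi _
  have h1 : (∫ y : Fin n → ℝ, F ((A⁻¹) *ᵥ y)) = |(A⁻¹).det|⁻¹ • ∫ x, F x := by
    have := integral_map (μ := (volume : Measure (Fin n → ℝ)))
      hφc.aemeasurable (f := F) hFc.aestronglyMeasurable
    rw [hmap, integral_smul_measure, ENNReal.toReal_ofReal (by positivity)] at this
    simpa only [Matrix.toLin'_apply, abs_inv] using this.symm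
  have habs : |(A⁻¹).det| = (A.det)⁻¹ := by
    rw [Matrix.det_nonsing_inv, Ring.inverse_eq_inv', abs_of_pos (inv_pos.mpr hdetA)]
  have h2 : (∫ x, F x) = ((A.det : ℂ))⁻¹ * ∫ y : Fin n → ℝ, F ((A⁻¹) *ᵥ y) := by
    rw [h1, habs, inv_inv, Complex.real_smul, ← mul_assoc,
      inv_mul_cancel₀ (by exact_mod_cast hdetA.ne'), one_mul]
  -- the transformed integrand
  set d : Fin n → ℂ := Bc *ᵥ bc with hd
  set c : Fin n → ℂ := fun i => (-(2 * (π:ℂ) * Complex.I)) * d i with hc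
  have hFy : ∀ y : Fin n → ℝ, F ((A⁻¹) *ᵥ y) =
      Complex.exp C₀ * Complex.exp (-∑ i, (2*(π:ℂ)) * (y i : ℂ)^2 + ∑ i, c i * (y i : ℂ)) := by
    intro y
    rw [hF]
    beta_reduce
    rw [Complex.exp_add]
    congr 1
    rw [cvec_mulVec, ← hBcdef]
    have hq : (Bc *ᵥ cvec y) ⬝ᵥ Sc *ᵥ (Bc *ᵥ cvec y) = ∑ i, (y i : ℂ)^2 := by
      rw [dot_swap, hBct, Matrix.mulVec_mulVec, Matrix.mulVec_mulVec]
      have : Bc * Sc * Bc = 1 := by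
        rw [hScAcAc, show Bc * (Ac * Ac) * Bc = (Bc * Ac) * (Ac * Bc) from by
          noncomm_ring, hBcAc, hAcBc, Matrix.one_mul]
      rw [this, Matrix.one_mulVec]
      simp [dotProduct, cvec, sq]
    have hl : (Bc *ᵥ cvec y) ⬝ᵥ bc = ∑ i, d i * (y i : ℂ) := by
      rw [dot_swap, hBct, ← hd]
      simp [dotProduct, cvec, mul_comm]
    rw [hq, hl]
    congr 1
    rw [Finset.mul_sum, Finset.mul_sum, ← Finset.sum_neg_distrib]
    congr 1
    · exact Finset.sum_congr rfl fun i _ => by ring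
    · exact Finset.sum_congr rfl fun i _ => by rw [hc]; ring
  have hπ : (π:ℂ) ≠ 0 := Complex.ofReal_ne_zero.mpr Real.pi_ne_zero
  have hb2 : ∀ _i : Fin n, 0 < (2 * (π:ℂ)).re := fun _ => by
    simp [Real.pi_pos]
  have hG := GaussianFourier.integral_cexp_neg_sum_mul_add hb2 c
  -- constants
  have hhalf : ((π:ℂ)/(2*π)) = ((2:ℝ)⁻¹ : ℝ) := by
    push_cast
    field_simp
  have hc2 : (((2:ℝ)⁻¹ : ℝ) : ℂ) ^ ((1:ℂ)/2) = ((Real.sqrt 2)⁻¹ : ℝ) := by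
    rw [show ((1:ℂ)/2) = ((2⁻¹ : ℝ) : ℂ) from by push_cast; ring,
      ← Complex.ofReal_cpow (by norm_num) (2⁻¹ : ℝ)]
    have hr : ((2:ℝ)⁻¹) ^ ((2⁻¹:ℝ)) = (Real.sqrt 2)⁻¹ := by
      rw [← Real.sqrt_inv, Real.sqrt_eq_rpow]
      norm_num
    rw [hr]
  -- the quadratic-form sum
  have hdd : d ⬝ᵥ d = bc ⬝ᵥ ((S⁻¹).map (fun r => (r:ℂ))) *ᵥ bc := by
    rw [hd, dot_swap, hBct, Matrix.mulVec_mulVec, ← hSinvc]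
  have hsum : ∑ i, c i ^ 2 / (4 * (2 * (π:ℂ))) =
      -((π:ℂ)/2) * (bc ⬝ᵥ ((S⁻¹).map (fun r => (r:ℂ))) *ᵥ bc) := by
    rw [← hdd]
    have hterm : ∀ i, c i ^ 2 / (4 * (2 * (π:ℂ))) = (-((π:ℂ)/2)) * (d i * d i) := by
      intro i
      have hci : c i ^ 2 = -(4*(π:ℂ)^2) * (d i * d i) := by
        rw [hc]
        linear_combination (4*(π:ℂ)^2*(d i * d i)) * Complex.I_sq
      rw [hci]
      field_simp
    rw [Finset.sum_congr rfl (fun i _ => hterm i), ← Finset.mul_sum]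
    rfl
  -- decompose Hform
  have hu : T *ᵥ cvec h.1 + cvec h.2 = (2*Complex.I) • (Sc *ᵥ cvec h.1) + bc := by
    rw [hbcdef]
    unfold uVecStar
    rw [← Matrix.smul_mulVec, hScdef, hSdef, ← sub_conj_matrix T, Matrix.sub_mulVec]
    abel
  have hHsplit : Hform T h h = (bc ⬝ᵥ ((S⁻¹).map (fun r => (r:ℂ))) *ᵥ bc) +
      2*Complex.I*(cvec h.1 ⬝ᵥ bc) := by
    unfold Hform uVec
    rw [← hSdef, ← hbcdef, hu, add_dotProduct, smul_dotProduct, dot_swap, hSct,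
      Matrix.mulVec_mulVec, hScSinv, Matrix.one_mulVec]
    rw [smul_eq_mul]
    ring
  -- constants
  have hconst : Real.sqrt (2^n * S.det) = (Real.sqrt 2)^n * A.det := by
    rw [show (2:ℝ)^n * S.det = ((Real.sqrt 2)^n * A.det)^2 from by
      rw [mul_pow, ← pow_mul, mul_comm n 2, pow_mul,
        Real.sq_sqrt (by norm_num : (0:ℝ) ≤ 2), sq, hdetAS],
      Real.sqrt_sq (by positivity)]
  -- assemble
  rw [h2]
  simp only [hFy]
  rw [integral_const_mul, hG, Finset.prod_mul_distrib, Finset.prod_const, hhalf, hc2,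
    ← Complex.exp_sum]
  simp only [Finset.card_univ, Fintype.card_fin]
  rw [hsum, hconst]
  have hexp : Complex.exp C₀ *
        Complex.exp (-((π:ℂ)/2) * (bc ⬝ᵥ ((S⁻¹).map (fun r => (r:ℂ))) *ᵥ bc)) =
      Complex.exp (-((π:ℂ)/2) * Hform T h h) := by
    rw [← Complex.exp_add]
    congr 1
    rw [hHsplit, hC₀]
    ring
  rw [← hexp]
  push_cast [mul_inv, inv_pow]
  ring

end
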